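/- Let Θ ⊆ ℝ^p be a nonempty set, let 0 < δ < 1 ≤ D < ∞, and let g, h : ℝ^p → ℝ be twice differentiable with g(θ), h(θ) ∈ [δ, D] for all θ ∈ Θ and with sup_{θ∈Θ}‖∇g‖, sup_{θ∈Θ}‖∇h‖, sup_{θ∈Θ}‖∇²g‖, sup_{θ∈Θ}‖∇²h‖ all finite. Set C₂(h) := 4(1 + (sup_{θ∈Θ}‖∇h(θ)‖)² + sup_{θ∈Θ}‖∇²h(θ)‖)/δ³. Then sup_{θ∈Θ} ‖∇²(log∘g)(θ) − ∇²(log∘h)(θ)‖ ≤ C₂(h) · ( sup_Θ|g − h| + sup_Θ‖∇g − ∇h‖ + (sup_Θ‖∇g − ∇h‖)² + sup_Θ‖∇²g − ∇²h‖ ), provided the suprema of |g − h|, ‖∇g − ∇h‖ and ‖∇²g − ∇²h‖ over Θ are finite. -/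

import Mathlib

open ContinuousLinearMap in
lemma hess_log_eq' {p : ℕ} (g : EuclideanSpace ℝ (Fin p) → ℝ)
    (hgd : Differentiable ℝ g) (hgd2 : Differentiable ℝ (fderiv ℝ g))
    (θ : EuclideanSpace ℝ (Fin p)) (hg : 0 < g θ) :
    fderiv ℝ (fderiv ℝ (fun x => Real.log (g x))) θ =
      (g θ)⁻¹ • fderiv ℝ (fderiv ℝ g) θ +
        ((-(g θ ^ 2)⁻¹ : ℝ) • fderiv ℝ g θ).smulRight (fderiv ℝ g θ) := by
  have hopen : {x : EuclideanSpace ℝ (Fin p) | 0 < g x} ∈ nhds θ :=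
    (isOpen_lt continuous_const hgd.continuous).mem_nhds hg
  have hev : fderiv ℝ (fun x => Real.log (g x)) =ᶠ[nhds θ]
      fun x => (g x)⁻¹ • fderiv ℝ g x := by
    filter_upwards [hopen] with x hx
    exact ((Real.hasDerivAt_log hx.ne').comp_hasFDerivAt x (hgd x).hasFDerivAt).fderiv
  rw [hev.fderiv_eq]
  have hinv : HasFDerivAt (fun x => (g x)⁻¹)
      ((-(g θ ^ 2)⁻¹ : ℝ) • fderiv ℝ g θ) θ :=
    (hasDerivAt_inv hg.ne').comp_hasFDerivAt θ (hgd θ).hasFDerivAt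
  exact (hinv.smul (hgd2 θ).hasFDerivAt).fderiv

open ContinuousLinearMap in
lemma decomp' {E : Type*} [NormedAddCommGroup E] [NormedSpace ℝ E]
    (u v : ℝ) (a a' : E →L[ℝ] ℝ) (b b' : E →L[ℝ] (E →L[ℝ] ℝ)) :
    (u⁻¹ • b + ((-(u^2)⁻¹ : ℝ) • a).smulRight a) -
      (v⁻¹ • b' + ((-(v^2)⁻¹ : ℝ) • a').smulRight a') =
    u⁻¹ • (b - b') + (u⁻¹ - v⁻¹) • b' +
      (-(u^2)⁻¹ : ℝ) • ((a - a').smulRight a + a'.smulRight (a - a')) +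
      (-((u^2)⁻¹ - (v^2)⁻¹) : ℝ) • (a'.smulRight a') := by
  ext w w'
  simp [ContinuousLinearMap.smulRight_apply, ContinuousLinearMap.smul_apply,
    ContinuousLinearMap.add_apply, ContinuousLinearMap.sub_apply, smul_eq_mul]
  ring

lemma clm_norm_smul {E₁ F₁ : Type*} [NormedAddCommGroup E₁] [NormedSpace ℝ E₁]
    [NormedAddCommGroup F₁] [NormedSpace ℝ F₁] (r : ℝ) (f : E₁ →L[ℝ] F₁) :
    ‖r • f‖ = |r| * ‖f‖ := by
  rw [← Real.norm_eq_abs]; exact norm_smul r f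

lemma arith' (t E0 E1 E2 M1 M2 : ℝ) (ht : 1 ≤ t)
    (h0 : 0 ≤ E0) (h1 : 0 ≤ E1) (h2 : 0 ≤ E2) (hM1 : 0 ≤ M1) (hM2 : 0 ≤ M2) :
    t * E2 + t^2 * E0 * M2 + t^2 * (E1 * (M1 + E1) + M1 * E1) + 2 * t^3 * E0 * M1^2 ≤
      4 * (1 + M1^2 + M2) * t^3 * (E0 + E1 + E1^2 + E2) := by
  have ht0 : 0 < t := lt_of_lt_of_le one_pos ht
  have htt : t ≤ t^3 := by nlinarith [sq_nonneg t, sq_nonneg (t-1)]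
  have htt2 : t^2 ≤ t^3 := by nlinarith [sq_nonneg t]
  have h3 : (0:ℝ) ≤ t^3 := by positivity
  nlinarith [mul_nonneg (mul_nonneg h0 hM2) (sub_nonneg.2 htt2),
    mul_nonneg h2 (sub_nonneg.2 htt),
    mul_nonneg (mul_nonneg h1 h1) (sub_nonneg.2 htt2),
    mul_nonneg (mul_nonneg h1 h3) (sq_nonneg (M1 - 1)),
    mul_nonneg h0 h3, mul_nonneg h1 h3, mul_nonneg h2 h3,
    mul_nonneg (mul_nonneg h1 h1) h3,
    mul_nonneg (mul_nonneg h0 hM2) h3,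
    mul_nonneg (mul_nonneg h0 (mul_nonneg hM1 hM1)) h3,
    mul_nonneg (mul_nonneg h1 hM1) (sub_nonneg.2 htt2)]

set_option maxHeartbeats 2000000 in
set_option synthInstance.maxHeartbeats 1000000 in
theorem stmt_16 {p : ℕ} (Θ : Set (EuclideanSpace ℝ (Fin p))) (hΘ : Θ.Nonempty)
    (δ D : ℝ) (hδ : 0 < δ) (hδ1 : δ < 1) (hD : 1 ≤ D)
    (g h : EuclideanSpace ℝ (Fin p) → ℝ)
    (hgd : Differentiable ℝ g) (hgd2 : Differentiable ℝ (fderiv ℝ g))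
    (hhd : Differentiable ℝ h) (hhd2 : Differentiable ℝ (fderiv ℝ h))
    (hgmem : ∀ θ ∈ Θ, g θ ∈ Set.Icc δ D) (hhmem : ∀ θ ∈ Θ, h θ ∈ Set.Icc δ D)
    (hbgg : BddAbove ((fun θ => ‖gradient g θ‖) '' Θ))
    (hbgh : BddAbove ((fun θ => ‖gradient h θ‖) '' Θ))
    (hbHg : BddAbove ((fun θ => ‖fderiv ℝ (fderiv ℝ g) θ‖) '' Θ))
    (hbHh : BddAbove ((fun θ => ‖fderiv ℝ (fderiv ℝ h) θ‖) '' Θ))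
    (hb0 : BddAbove ((fun θ => |g θ - h θ|) '' Θ))
    (hb1 : BddAbove ((fun θ => ‖gradient g θ - gradient h θ‖) '' Θ))
    (hb2 : BddAbove ((fun θ => ‖fderiv ℝ (fderiv ℝ g) θ - fderiv ℝ (fderiv ℝ h) θ‖) '' Θ)) :
    sSup ((fun θ => ‖fderiv ℝ (fderiv ℝ (fun x => Real.log (g x))) θ -
        fderiv ℝ (fderiv ℝ (fun x => Real.log (h x))) θ‖) '' Θ) ≤
      (4 * (1 + sSup ((fun θ => ‖gradient h θ‖) '' Θ) ^ 2 +
          sSup ((fun θ => ‖fderiv ℝ (fderiv ℝ h) θ‖) '' Θ)) / δ ^ 3) *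
        (sSup ((fun θ => |g θ - h θ|) '' Θ) +
          sSup ((fun θ => ‖gradient g θ - gradient h θ‖) '' Θ) +
          sSup ((fun θ => ‖gradient g θ - gradient h θ‖) '' Θ) ^ 2 +
          sSup ((fun θ => ‖fderiv ℝ (fderiv ℝ g) θ - fderiv ℝ (fderiv ℝ h) θ‖) '' Θ)) := by
  set M1 := sSup ((fun θ => ‖gradient h θ‖) '' Θ) with hM1def
  set M2 := sSup ((fun θ => ‖fderiv ℝ (fderiv ℝ h) θ‖) '' Θ) with hM2def
  set E0 := sSup ((fun θ => |g θ - h θ|) '' Θ) with hE0def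
  set E1 := sSup ((fun θ => ‖gradient g θ - gradient h θ‖) '' Θ) with hE1def
  set E2 := sSup ((fun θ => ‖fderiv ℝ (fderiv ℝ g) θ - fderiv ℝ (fderiv ℝ h) θ‖) '' Θ)
    with hE2def
  apply csSup_le (hΘ.image _)
  rintro x ⟨θ, hθ, rfl⟩
  simp only
  -- pointwise quantities
  set u := g θ with hudef
  set v := h θ with hvdef
  set a := fderiv ℝ g θ with hadef
  set a' := fderiv ℝ h θ with ha'def
  set b := fderiv ℝ (fderiv ℝ g) θ with hbdef
  set b' := fderiv ℝ (fderiv ℝ h) θ with hb'def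
  have huδ : δ ≤ u := (hgmem θ hθ).1
  have hvδ : δ ≤ v := (hhmem θ hθ).1
  have hu0 : 0 < u := lt_of_lt_of_le hδ huδ
  have hv0 : 0 < v := lt_of_lt_of_le hδ hvδ
  -- sup bounds at θ
  have h0 : |u - v| ≤ E0 := le_csSup hb0 ⟨θ, hθ, rfl⟩
  have hgradnorm : ∀ (f : EuclideanSpace ℝ (Fin p) → ℝ) (x : EuclideanSpace ℝ (Fin p)),
      ‖gradient f x‖ = ‖fderiv ℝ f x‖ := fun f x => by
    rw [gradient]; exact LinearIsometryEquiv.norm_map _ _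
  have h1 : ‖a - a'‖ ≤ E1 := by
    have h1' : ‖gradient g θ - gradient h θ‖ ≤ E1 := le_csSup hb1 ⟨θ, hθ, rfl⟩
    have heq : gradient g θ - gradient h θ =
        (InnerProductSpace.toDual ℝ (EuclideanSpace ℝ (Fin p))).symm (a - a') := by
      rw [gradient, gradient, map_sub]
    rwa [heq, LinearIsometryEquiv.norm_map] at h1'
  have h2 : ‖b - b'‖ ≤ E2 := le_csSup hb2 ⟨θ, hθ, rfl⟩
  have hM1 : ‖a'‖ ≤ M1 := by
    have hh : ‖gradient h θ‖ ≤ M1 := le_csSup hbgh ⟨θ, hθ, rfl⟩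
    rwa [hgradnorm] at hh
  have hM2 : ‖b'‖ ≤ M2 := le_csSup hbHh ⟨θ, hθ, rfl⟩
  have hE0n : 0 ≤ E0 := le_trans (abs_nonneg _) h0
  have hE1n : 0 ≤ E1 := le_trans (norm_nonneg _) h1
  have hE2n : 0 ≤ E2 := le_trans (ContinuousLinearMap.opNorm_nonneg _) h2
  have hM1n : 0 ≤ M1 := le_trans (norm_nonneg _) hM1
  have hM2n : 0 ≤ M2 := le_trans (ContinuousLinearMap.opNorm_nonneg _) hM2
  -- rewrite the Hessians
  rw [hess_log_eq' g hgd hgd2 θ hu0, hess_log_eq' h hhd hhd2 θ hv0]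
  rw [← hudef, ← hvdef, ← hadef, ← ha'def, ← hbdef, ← hb'def]
  rw [decomp' u v a a' b b']
  set t := δ⁻¹ with htdef
  clear_value M1 M2 E0 E1 E2 u v a a' b b' t
  have ht0 : 0 < t := by rw [htdef]; positivity
  have ht1 : 1 ≤ t := by rw [htdef]; exact one_le_inv_iff₀.2 ⟨hδ, hδ1.le⟩
  have hut : u⁻¹ ≤ t := by rw [htdef]; exact inv_anti₀ hδ huδ
  have hvt : v⁻¹ ≤ t := by rw [htdef]; exact inv_anti₀ hδ hvδ
  -- key scalar bound
  have hI : |u⁻¹ - v⁻¹| ≤ t^2 * E0 := by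
    rw [inv_sub_inv hu0.ne' hv0.ne', abs_div, abs_of_pos (mul_pos hu0 hv0),
      abs_sub_comm]
    calc |u - v| / (u * v) ≤ E0 / (δ * δ) :=
          div_le_div₀ hE0n h0 (mul_pos hδ hδ) (mul_le_mul huδ hvδ hδ.le hu0.le)
      _ = t^2 * E0 := by rw [htdef]; field_simp [sq]
  have hI2 : |(u^2)⁻¹ - (v^2)⁻¹| ≤ 2 * t^3 * E0 := by
    have hfac : (u^2)⁻¹ - (v^2)⁻¹ = (u⁻¹ + v⁻¹) * (u⁻¹ - v⁻¹) := by
      rw [← inv_pow, ← inv_pow, sq_sub_sq]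
    rw [hfac, abs_mul, abs_of_pos (by positivity : (0:ℝ) < u⁻¹ + v⁻¹)]
    calc (u⁻¹ + v⁻¹) * |u⁻¹ - v⁻¹| ≤ (t + t) * (t^2 * E0) :=
          mul_le_mul (add_le_add hut hvt) hI (abs_nonneg _) (by positivity)
      _ = 2 * t^3 * E0 := by ring
  have hna : ‖a‖ ≤ M1 + E1 := by
    have := norm_sub_norm_le a a'
    linarith
  -- term bounds
  have B1 : ‖u⁻¹ • (b - b')‖ ≤ t * E2 := by
    rw [clm_norm_smul, abs_of_pos (inv_pos.2 hu0)]
    exact mul_le_mul hut h2 (norm_nonneg _) ht0.le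
  have B2 : ‖(u⁻¹ - v⁻¹) • b'‖ ≤ t^2 * E0 * M2 := by
    rw [clm_norm_smul]
    exact mul_le_mul hI hM2 (norm_nonneg _) (by positivity)
  have B3 : ‖(-(u^2)⁻¹ : ℝ) • ((a - a').smulRight a + a'.smulRight (a - a'))‖ ≤
      t^2 * (E1 * (M1 + E1) + M1 * E1) := by
    rw [clm_norm_smul, abs_neg, abs_of_pos (by positivity : (0:ℝ) < (u^2)⁻¹)]
    have hu2 : (u^2)⁻¹ ≤ t^2 := by
      rw [← inv_pow]
      exact pow_le_pow_left₀ (by positivity) hut 2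
    have hX : ‖(a - a').smulRight a + a'.smulRight (a - a')‖ ≤
        E1 * (M1 + E1) + M1 * E1 := by
      refine (ContinuousLinearMap.opNorm_add_le _ _).trans ?_
      rw [ContinuousLinearMap.norm_smulRight_apply, ContinuousLinearMap.norm_smulRight_apply]
      exact add_le_add (mul_le_mul h1 hna (norm_nonneg _) (by positivity))
        (mul_le_mul hM1 h1 (norm_nonneg _) hM1n)
    exact mul_le_mul hu2 hX (norm_nonneg _) (by positivity)
  have B4 : ‖(-((u^2)⁻¹ - (v^2)⁻¹) : ℝ) • (a'.smulRight a')‖ ≤ 2 * t^3 * E0 * M1^2 := by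
    rw [clm_norm_smul, abs_neg, ContinuousLinearMap.norm_smulRight_apply]
    calc |(u^2)⁻¹ - (v^2)⁻¹| * (‖a'‖ * ‖a'‖) ≤ (2 * t^3 * E0) * (M1 * M1) :=
          mul_le_mul hI2 (mul_le_mul hM1 hM1 (norm_nonneg _) hM1n)
            (by positivity) (by positivity)
      _ = 2 * t^3 * E0 * M1^2 := by ring
  have hRHSeq : 4 * (1 + M1^2 + M2) / δ^3 = 4 * (1 + M1^2 + M2) * t^3 := by
    rw [htdef, div_eq_mul_inv, inv_pow]
  calc ‖u⁻¹ • (b - b') + (u⁻¹ - v⁻¹) • b' +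
        (-(u^2)⁻¹ : ℝ) • ((a - a').smulRight a + a'.smulRight (a - a')) +
        (-((u^2)⁻¹ - (v^2)⁻¹) : ℝ) • (a'.smulRight a')‖ ≤
      ‖u⁻¹ • (b - b')‖ + ‖(u⁻¹ - v⁻¹) • b'‖ +
        ‖(-(u^2)⁻¹ : ℝ) • ((a - a').smulRight a + a'.smulRight (a - a'))‖ +
        ‖(-((u^2)⁻¹ - (v^2)⁻¹) : ℝ) • (a'.smulRight a')‖ := by
        refine (ContinuousLinearMap.opNorm_add_le _ _).trans ?_
        gcongr
        refine (ContinuousLinearMap.opNorm_add_le _ _).trans ?_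
        gcongr
        exact ContinuousLinearMap.opNorm_add_le _ _
    _ ≤ t * E2 + t^2 * E0 * M2 + t^2 * (E1 * (M1 + E1) + M1 * E1) + 2 * t^3 * E0 * M1^2 := by
        gcongr
    _ ≤ 4 * (1 + M1^2 + M2) * t^3 * (E0 + E1 + E1^2 + E2) :=
        arith' t E0 E1 E2 M1 M2 ht1 hE0n hE1n hE2n hM1n hM2n
    _ = 4 * (1 + M1^2 + M2) / δ^3 * (E0 + E1 + E1^2 + E2) := by rw [hRHSeq]
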